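/- arXiv:1701.07074 — 2 statements merged into one kernel-verified Lean document; each statement's English description precedes it below -/
import Mathlib

section
/- Let ℓ, r be positive integers and let u, v be integer sequences satisfying, for all i ≥ 1, u_{i+1} = (r+1)·u_i + (ℓ + r·(ℓ−1))·v_i and v_{i+1} = r·u_i + (ℓ + (r−1)·(ℓ−1))·v_i. Then for all i ≥ 1, u_{i+2} = (ℓ·r + 2)·u_{i+1} − u_i. -/
theorem stmt_2 (ℓ r : ℕ) (hℓ : 1 ≤ ℓ) (hr : 1 ≤ r) (u v : ℕ → ℤ)
    (hu : ∀ i, 1 ≤ i → u (i + 1) = ((r : ℤ) + 1) * u i + ((ℓ : ℤ) + r * ((ℓ : ℤ) - 1)) * v i)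
    (hv : ∀ i, 1 ≤ i → v (i + 1) = (r : ℤ) * u i + ((ℓ : ℤ) + ((r : ℤ) - 1) * ((ℓ : ℤ) - 1)) * v i) :
    ∀ i, 1 ≤ i → u (i + 2) = ((ℓ : ℤ) * r + 2) * u (i + 1) - u i := by
  intro i hi
  have h1 := hu i hi
  have h2 := hv i hi
  have h3 := hu (i + 1) (by omega)
  have : i + 1 + 1 = i + 2 := by ring
  rw [this] at h3
  rw [h3, h1, h2]
  ring
end

section
/- Let α ≥ 3 and ℓ, r ≥ 1 be integers with ℓ·r = α − 2. Let f be an integer sequence satisfying f_i = α·f_{i−1} − f_{i−2} for i ≥ 2. Suppose for some j ≥ 1 the number m = (f_{j+1} − (r+1)·f_j) / (ℓ + r·(ℓ−1)) is an integer. Define sequences u, v by u₁ = f_j, v₁ = m, u_{i+1} = (r+1)·u_i + (ℓ + r·(ℓ−1))·v_i, v_{i+1} = r·u_i + (ℓ + (r−1)·(ℓ−1))·v_i. Then u_i = f_{j+i−1} for all i ≥ 1. -/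
theorem stmt_11 (α ℓ r : ℕ) (hα : 3 ≤ α) (hℓ : 1 ≤ ℓ) (hr : 1 ≤ r) (hlr : ℓ * r = α - 2)
    (f : ℕ → ℤ) (hrec : ∀ i, 2 ≤ i → f i = (α : ℤ) * f (i - 1) - f (i - 2))
    (j : ℕ) (hj : 1 ≤ j) (m : ℤ)
    (hm : ((ℓ : ℤ) + r * ((ℓ : ℤ) - 1)) * m = f (j + 1) - ((r : ℤ) + 1) * f j)
    (u v : ℕ → ℤ) (hu1 : u 1 = f j) (hv1 : v 1 = m)
    (hu : ∀ i, 1 ≤ i → u (i + 1) = ((r : ℤ) + 1) * u i + ((ℓ : ℤ) + r * ((ℓ : ℤ) - 1)) * v i)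
    (hv : ∀ i, 1 ≤ i → v (i + 1) = (r : ℤ) * u i + ((ℓ : ℤ) + ((r : ℤ) - 1) * ((ℓ : ℤ) - 1)) * v i) :
    ∀ i, 1 ≤ i → u i = f (j + i - 1) := by
  have hα' : (α : ℤ) = (ℓ : ℤ) * r + 2 := by
    have h : α = ℓ * r + 2 := by omega
    exact_mod_cast congrArg (Nat.cast : ℕ → ℤ) h
  have key : ∀ i, 1 ≤ i → u i = f (j + i - 1) ∧
      ((ℓ : ℤ) + r * ((ℓ : ℤ) - 1)) * v i = f (j + i) - ((r : ℤ) + 1) * f (j + i - 1) := by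
    intro i hi
    induction i with
    | zero => omega
    | succ n ih =>
      rcases Nat.eq_zero_or_pos n with hn | hn
      · subst hn
        refine ⟨by simpa using hu1, ?_⟩
        rw [hv1, show j + 1 - 1 = j from by omega]
        exact hm
      · obtain ⟨ihu, ihv⟩ := ih hn
        have hidx2 : j + (n + 1) - 1 = j + n := by omega
        have hf : f (j + n + 1) = (α : ℤ) * f (j + n) - f (j + n - 1) := by
          have := hrec (j + n + 1) (by omega)
          simpa [show j + n + 1 - 1 = j + n from by omega,
            show j + n + 1 - 2 = j + n - 1 from by omega] using this
        constructor
        · rw [hidx2, hu n hn, ihu]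
          linarith [ihv]
        · rw [hidx2, hv n hn, show j + (n + 1) = j + n + 1 from by omega, hf, hα', ihu]
          linear_combination ((ℓ : ℤ) + ((r : ℤ) - 1) * ((ℓ : ℤ) - 1)) * ihv
  exact fun i hi => (key i hi).1
end
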